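/- Fix δ ∈ (0, 1/2) and constants C₁ > 0 and c₂ > 0. There exists a constant k > 0, depending only on C₁, c₂ and δ, such that for every real M ≥ 1 and every twice continuously differentiable function R : [δ, 1−δ] → ℝ satisfying ∫_δ^{1−δ} (R″(t))² dt ≤ C₁ M² and ∫_δ^{1−δ} (R′(t))² dt ≥ c₂, one has ∫_δ^{1−δ} (R(t))² dt ≥ k M⁻². -/

import Mathlib

open MeasureTheory Set


/-- Cauchy–Schwarz for interval integrals: `(∫|g|)² ≤ (q-p) ∫ g²`. -/
lemma cs_aux (g : ℝ → ℝ) (p q : ℝ) (hpq : p ≤ q) (hg : ContinuousOn g (Icc p q)) :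
    (∫ t in p..q, |g t|) ^ 2 ≤ (q - p) * ∫ t in p..q, (g t) ^ 2 := by
  rcases eq_or_lt_of_le hpq with rfl | hlt
  · simp
  have hL : (0:ℝ) < q - p := by linarith
  set S := ∫ t in p..q, |g t| with hS
  set Q := ∫ t in p..q, (g t) ^ 2 with hQ
  set c : ℝ := S / (q - p) with hc
  have hgabs : ContinuousOn (fun t => |g t|) (Icc p q) := hg.abs
  have hgsq : ContinuousOn (fun t => (g t) ^ 2) (Icc p q) := hg.pow 2
  have iabs : IntervalIntegrable (fun t => |g t|) volume p q :=
    (hgabs.mono (by rw [uIcc_of_le hpq])).intervalIntegrable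
  have isq : IntervalIntegrable (fun t => (g t) ^ 2) volume p q :=
    (hgsq.mono (by rw [uIcc_of_le hpq])).intervalIntegrable
  have key : 0 ≤ ∫ t in p..q, (|g t| - c) ^ 2 :=
    intervalIntegral.integral_nonneg hpq (fun u _ => sq_nonneg _)
  have expand : (∫ t in p..q, (|g t| - c) ^ 2)
      = Q - 2 * c * S + c ^ 2 * (q - p) := by
    have e : ∀ t, (|g t| - c) ^ 2 = (g t) ^ 2 - 2 * c * |g t| + c ^ 2 := by
      intro t
      have : |g t| ^ 2 = (g t) ^ 2 := sq_abs _
      nlinarith [this]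
    rw [intervalIntegral.integral_congr (fun t _ => e t)]
    rw [intervalIntegral.integral_add (isq.sub (iabs.const_mul (2 * c)))
      intervalIntegrable_const,
      intervalIntegral.integral_sub isq (iabs.const_mul (2 * c)),
      intervalIntegral.integral_const_mul, intervalIntegral.integral_const]
    simp [smul_eq_mul]
    ring
  rw [expand] at key
  have hcL : c * (q - p) = S := div_mul_cancel₀ _ (ne_of_gt hL)
  nlinarith [mul_nonneg (le_of_lt hL) key]

/-- On any subinterval `[r,s]` there is a point `u` with `f(u)²·(s-r) ≤ ∫_p^q f²`. -/
lemma exists_small (f : ℝ → ℝ) (p q r s : ℝ) (hpq : p ≤ q)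
    (hf : ContinuousOn f (Icc p q)) (hr : p ≤ r) (hrs : r < s) (hs : s ≤ q) :
    ∃ u ∈ Icc r s, (f u) ^ 2 * (s - r) ≤ ∫ t in p..q, (f t) ^ 2 := by
  have hsub : Icc r s ⊆ Icc p q := Icc_subset_Icc hr hs
  have hcont : ContinuousOn (fun t => (f t) ^ 2) (Icc r s) := (hf.mono hsub).pow 2
  obtain ⟨u, hu, hmin⟩ := isCompact_Icc.exists_isMinOn (nonempty_Icc.2 hrs.le) hcont
  refine ⟨u, hu, ?_⟩
  have isq : IntervalIntegrable (fun t => (f t) ^ 2) volume p q :=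
    ((hf.pow 2).mono (by rw [uIcc_of_le hpq])).intervalIntegrable
  have isq' : IntervalIntegrable (fun t => (f t) ^ 2) volume r s :=
    isq.mono_set (by rw [uIcc_of_le hpq, uIcc_of_le hrs.le]; exact hsub)
  calc (f u) ^ 2 * (s - r) = ∫ _ in r..s, (f u) ^ 2 := by
        rw [intervalIntegral.integral_const]; simp [smul_eq_mul]; ring
    _ ≤ ∫ t in r..s, (f t) ^ 2 := by
        apply intervalIntegral.integral_mono_on hrs.le intervalIntegrable_const isq'
        intro x hx; exact hmin hx
    _ ≤ ∫ t in p..q, (f t) ^ 2 :=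
        intervalIntegral.integral_mono_interval hr hrs.le hs
          (Filter.Eventually.of_forall (fun t => sq_nonneg _)) isq
/-- FTC within a closed interval, from `HasDerivWithinAt` on `Icc`. -/
lemma ftc_icc (g g' : ℝ → ℝ) (p q : ℝ)
    (hg : ∀ t ∈ Icc p q, HasDerivWithinAt g (g' t) (Icc p q) t)
    (hg' : ContinuousOn g' (Icc p q)) :
    ∀ u ∈ Icc p q, ∀ v ∈ Icc p q, u ≤ v → ∫ t in u..v, g' t = g v - g u := by
  intro u hu v hv huv
  have hsub : Icc u v ⊆ Icc p q := Icc_subset_Icc hu.1 hv.2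
  apply intervalIntegral.integral_eq_sub_of_hasDeriv_right_of_le huv
    (ContinuousOn.mono (fun t ht => (hg t ht).continuousWithinAt) hsub)
    ?_ ((hg'.mono (by rwa [uIcc_of_le huv])).intervalIntegrable)
  intro x hx
  have hx' : x ∈ Ioo p q := ⟨lt_of_le_of_lt hu.1 hx.1, lt_of_lt_of_le hx.2 hv.2⟩
  exact ((hg x (Ioo_subset_Icc_self hx')).hasDerivAt
    (Icc_mem_nhds hx'.1 hx'.2)).hasDerivWithinAt

set_option maxHeartbeats 800000 in
/-- Local interpolation inequality on an interval of length `h = q - p`. -/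
lemma local_ineq (f f' f'' : ℝ → ℝ) (p q : ℝ) (hpq : p < q)
    (hd1 : ∀ t ∈ Icc p q, HasDerivWithinAt f (f' t) (Icc p q) t)
    (hd2 : ∀ t ∈ Icc p q, HasDerivWithinAt f' (f'' t) (Icc p q) t)
    (hc2 : ContinuousOn f'' (Icc p q)) :
    (∫ t in p..q, (f' t) ^ 2) ≤ 162 / (q - p) ^ 2 * (∫ t in p..q, (f t) ^ 2)
      + 3 * (q - p) ^ 2 * (∫ t in p..q, (f'' t) ^ 2) := by
  set h := q - p with hh
  have hh0 : 0 < h := by simp only [hh]; linarith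
  have hcf' : ContinuousOn f' (Icc p q) := fun t ht => (hd2 t ht).continuousWithinAt
  have hcf : ContinuousOn f (Icc p q) := fun t ht => (hd1 t ht).continuousWithinAt
  set Q := ∫ t in p..q, (f t) ^ 2 with hQdef
  set Q2 := ∫ t in p..q, (f'' t) ^ 2 with hQ2def
  set D := ∫ s in p..q, |f'' s| with hDdef
  have iabs2 : IntervalIntegrable (fun s => |f'' s|) volume p q :=
    (hc2.abs.mono (by rw [uIcc_of_le hpq.le])).intervalIntegrable
  have hD0 : 0 ≤ D := intervalIntegral.integral_nonneg hpq.le (fun t _ => abs_nonneg _)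
  have hQ0 : 0 ≤ Q := intervalIntegral.integral_nonneg hpq.le fun t _ => sq_nonneg _
  have hQ20 : 0 ≤ Q2 := intervalIntegral.integral_nonneg hpq.le fun t _ => sq_nonneg _
  -- two-sided FTC for f'
  have ftc2 : ∀ x ∈ Icc p q, ∀ t ∈ Icc p q, f' t - f' x = ∫ s in x..t, f'' s := by
    intro x hx t ht
    rcases le_total x t with hxt | htx
    · rw [ftc_icc f' f'' p q hd2 hc2 x hx t ht hxt]
    · rw [intervalIntegral.integral_symm, ftc_icc f' f'' p q hd2 hc2 t ht x hx htx]; ring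
  -- uniform bound |f' t - f' x| ≤ D
  have hDb : ∀ x ∈ Icc p q, ∀ t ∈ Icc p q, |f' t - f' x| ≤ D := by
    intro x hx t ht
    rw [ftc2 x hx t ht]
    calc |∫ s in x..t, f'' s| ≤ abs (∫ s in x..t, |f'' s|) := by
          simpa [Real.norm_eq_abs] using
            intervalIntegral.norm_integral_le_abs_integral_norm (f := f'') (a := x) (b := t)
      _ ≤ abs (∫ s in p..q, |f'' s|) := by
          apply intervalIntegral.abs_integral_mono_interval
          · refine Set.Ioc_subset_Ioc (le_min ?_ ?_) (max_le ?_ ?_)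
            · exact le_trans (min_le_left p q) hx.1
            · exact le_trans (min_le_left p q) ht.1
            · exact le_trans hx.2 (le_max_right p q)
            · exact le_trans ht.2 (le_max_right p q)
          · exact Filter.Eventually.of_forall (fun s => abs_nonneg _)
          · exact iabs2
      _ = D := abs_of_nonneg hD0
  -- pick good points u, v
  obtain ⟨u, hu, hub⟩ := exists_small f p q p (p + h/3) hpq.le hcf le_rfl (by linarith)
    (by simp only [hh]; linarith)
  obtain ⟨v, hv, hvb⟩ := exists_small f p q (q - h/3) q hpq.le hcf
    (by simp only [hh]; linarith) (by linarith) le_rfl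
  have hub2 : (f u) ^ 2 * (h / 3) ≤ Q := by rw [hQdef]; linarith [hub]
  have hvb2 : (f v) ^ 2 * (h / 3) ≤ Q := by rw [hQdef]; linarith [hvb]
  have hu' : u ∈ Icc p q := ⟨hu.1, le_trans hu.2 (by simp only [hh]; linarith)⟩
  have hv' : v ∈ Icc p q := ⟨le_trans (by simp only [hh]; linarith) hv.1, hv.2⟩
  have huv : h/3 ≤ v - u := by
    have h1 := hu.2; have h2 := hv.1
    simp only [hh] at h1 h2 ⊢; linarith
  have huv0 : u < v := by linarith
  set B := 3 / h * (|f u| + |f v|) + D with hBdef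
  have hS0 : 0 ≤ |f u| + |f v| := add_nonneg (abs_nonneg _) (abs_nonneg _)
  -- pointwise bound
  have key : ∀ x ∈ Icc p q, (f' x) ^ 2 ≤ B ^ 2 := by
    intro x hx
    have ix : IntervalIntegrable f' volume u v :=
      (hcf'.mono (by rw [uIcc_of_le huv0.le]; exact Icc_subset_Icc hu'.1 hv'.2)).intervalIntegrable
    have e1 : ∫ t in u..v, f' t = f v - f u := ftc_icc f f' p q hd1 hcf' u hu' v hv' huv0.le
    have e2 : ∫ t in u..v, (f' t - f' x) = (f v - f u) - (v - u) * f' x := by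
      rw [intervalIntegral.integral_sub ix (_root_.intervalIntegrable_const), e1,
        intervalIntegral.integral_const, smul_eq_mul]
    have isubc : ContinuousOn (fun t => |f' t - f' x|) (Icc u v) :=
      ((hcf'.mono (Icc_subset_Icc hu'.1 hv'.2)).sub continuousOn_const).abs
    have e3 : |∫ t in u..v, (f' t - f' x)| ≤ (v - u) * D := by
      calc |∫ t in u..v, (f' t - f' x)| ≤ ∫ t in u..v, |f' t - f' x| :=
            intervalIntegral.abs_integral_le_integral_abs huv0.le
        _ ≤ ∫ _ in u..v, D := by
            apply intervalIntegral.integral_mono_on huv0.le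
              ((isubc.mono (by rw [uIcc_of_le huv0.le])).intervalIntegrable)
              (_root_.intervalIntegrable_const)
            intro t ht
            exact hDb x hx t (Icc_subset_Icc hu'.1 hv'.2 ht)
        _ = (v - u) * D := by rw [intervalIntegral.integral_const, smul_eq_mul]
    have e4 : (v - u) * |f' x| ≤ (|f u| + |f v|) + (v - u) * D := by
      have hrw : (v - u) * f' x = (f v - f u) - ∫ t in u..v, (f' t - f' x) := by
        rw [e2]; ring
      calc (v - u) * |f' x| = |(v - u) * f' x| := by
            rw [abs_mul, abs_of_nonneg (by linarith : (0:ℝ) ≤ v - u)]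
        _ ≤ |f v - f u| + |∫ t in u..v, (f' t - f' x)| := by
            rw [hrw]; exact abs_sub _ _
        _ ≤ (|f u| + |f v|) + (v - u) * D := by
            have h5 := abs_sub (f v) (f u)
            linarith [e3]
    have step : h * |f' x| ≤ 3 * (|f u| + |f v|) + h * D := by
      nlinarith [mul_le_mul_of_nonneg_left e4 hh0.le,
        mul_nonneg hS0 (by linarith : (0:ℝ) ≤ 3 * (v - u) - h),
        mul_nonneg hD0 (by linarith : (0:ℝ) ≤ v - u),
        (by linarith : (0:ℝ) < v - u)]
    have hfx : |f' x| ≤ B := by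
      rw [hBdef]
      rw [show 3 / h * (|f u| + |f v|) + D = (3 * (|f u| + |f v|) + h * D) / h by
        field_simp]
      rw [le_div_iff₀ hh0]
      linarith [step]
    calc (f' x) ^ 2 = |f' x| ^ 2 := (sq_abs _).symm
      _ ≤ B ^ 2 := pow_le_pow_left₀ (abs_nonneg _) hfx 2
  -- integrate the pointwise bound
  have isq' : IntervalIntegrable (fun t => (f' t) ^ 2) volume p q :=
    ((hcf'.pow 2).mono (by rw [uIcc_of_le hpq.le])).intervalIntegrable
  have main : (∫ t in p..q, (f' t) ^ 2) ≤ h * B ^ 2 := by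
    calc (∫ t in p..q, (f' t) ^ 2) ≤ ∫ _ in p..q, B ^ 2 :=
          intervalIntegral.integral_mono_on hpq.le isq' (_root_.intervalIntegrable_const) key
      _ = h * B ^ 2 := by rw [intervalIntegral.integral_const, smul_eq_mul]
  have hcs : D ^ 2 ≤ h * Q2 := by
    have := cs_aux f'' p q hpq.le hc2
    rw [hDdef, hQ2def, hh]
    exact this
  have gen : ∀ a b c : ℝ, (a + b + c) ^ 2 ≤ 3 * (a ^ 2 + b ^ 2 + c ^ 2) := by
    intro a b c; nlinarith [sq_nonneg (a - b), sq_nonneg (a - c), sq_nonneg (b - c)]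
  have ea : (3 / h * |f u|) ^ 2 = 9 / h ^ 2 * (f u) ^ 2 := by
    rw [mul_pow, sq_abs, div_pow]; norm_num
  have eb : (3 / h * |f v|) ^ 2 = 9 / h ^ 2 * (f v) ^ 2 := by
    rw [mul_pow, sq_abs, div_pow]; norm_num
  have hB2 : B ^ 2 ≤ 3 * (9 / h ^ 2 * (f u) ^ 2 + 9 / h ^ 2 * (f v) ^ 2 + D ^ 2) := by
    have := gen (3 / h * |f u|) (3 / h * |f v|) D
    rw [ea, eb] at this
    rw [hBdef, show 3 / h * (|f u| + |f v|) + D = 3 / h * |f u| + 3 / h * |f v| + D by ring]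
    exact this
  have h1 : (f u) ^ 2 ≤ 3 / h * Q := by
    rw [div_mul_eq_mul_div, le_div_iff₀ hh0]; nlinarith [hub2]
  have h2 : (f v) ^ 2 ≤ 3 / h * Q := by
    rw [div_mul_eq_mul_div, le_div_iff₀ hh0]; nlinarith [hvb2]
  calc (∫ t in p..q, (f' t) ^ 2) ≤ h * B ^ 2 := main
    _ ≤ h * (3 * (9 / h ^ 2 * (f u) ^ 2 + 9 / h ^ 2 * (f v) ^ 2 + D ^ 2)) :=
        mul_le_mul_of_nonneg_left hB2 hh0.le
    _ = 27 / h * (f u) ^ 2 + 27 / h * (f v) ^ 2 + 3 * h * D ^ 2 := by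
        field_simp; ring
    _ ≤ 27 / h * (3 / h * Q) + 27 / h * (3 / h * Q) + 3 * h * (h * Q2) := by
        refine add_le_add (add_le_add ?_ ?_) ?_
        · exact mul_le_mul_of_nonneg_left h1 (by positivity)
        · exact mul_le_mul_of_nonneg_left h2 (by positivity)
        · exact mul_le_mul_of_nonneg_left hcs (by positivity)
    _ = 162 / h ^ 2 * Q + 3 * h ^ 2 * Q2 := by
        field_simp; ring
lemma global_ineq (f f' f'' : ℝ → ℝ) (a b : ℝ) (n : ℕ) (hn : 0 < n) (hab : a < b)
    (hd1 : ∀ t ∈ Icc a b, HasDerivWithinAt f (f' t) (Icc a b) t)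
    (hd2 : ∀ t ∈ Icc a b, HasDerivWithinAt f' (f'' t) (Icc a b) t)
    (hc2 : ContinuousOn f'' (Icc a b)) :
    (∫ t in a..b, (f' t) ^ 2) ≤ 162 / ((b - a) / n) ^ 2 * (∫ t in a..b, (f t) ^ 2)
      + 3 * ((b - a) / n) ^ 2 * (∫ t in a..b, (f'' t) ^ 2) := by
  have hn0 : (0:ℝ) < n := Nat.cast_pos.mpr hn
  set h := (b - a) / n with hhdef
  have hh0 : 0 < h := div_pos (by linarith) hn0
  set pts : ℕ → ℝ := fun j => a + j * h with hpts
  have hpts0 : pts 0 = a := by simp [hpts]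
  have hptsn : pts n = b := by
    simp only [hpts, hhdef]
    field_simp
    ring
  have hdiff : ∀ j : ℕ, pts (j + 1) - pts j = h := by
    intro j; simp only [hpts]; push_cast; ring
  have hlt : ∀ j : ℕ, pts j < pts (j + 1) := by
    intro j; have := hdiff j; linarith
  have hsub : ∀ j : ℕ, j < n → Icc (pts j) (pts (j + 1)) ⊆ Icc a b := by
    intro j hj
    apply Icc_subset_Icc
    · simp only [hpts]; nlinarith [hh0, Nat.cast_nonneg (α := ℝ) j]
    · have hj1 : ((j:ℝ) + 1) ≤ n := by exact_mod_cast Nat.succ_le_of_lt hj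
      simp only [hpts]
      push_cast
      nlinarith [hh0, mul_le_mul_of_nonneg_right hj1 hh0.le, mul_div_cancel₀ (b - a) hn0.ne']
    -- pts (j+1) = a + (j+1)h ≤ a + n*h = b
  have hcf : ContinuousOn f (Icc a b) := fun t ht => (hd1 t ht).continuousWithinAt
  have hcf' : ContinuousOn f' (Icc a b) := fun t ht => (hd2 t ht).continuousWithinAt
  have hint : ∀ g : ℝ → ℝ, ContinuousOn g (Icc a b) → ∀ k : ℕ, k < n →
      IntervalIntegrable (fun t => (g t) ^ 2) volume (pts k) (pts (k + 1)) := by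
    intro g hg k hk
    apply ContinuousOn.intervalIntegrable
    apply (hg.pow 2).mono
    rw [uIcc_of_le (hlt k).le]
    exact hsub k hk
  have sum1 := intervalIntegral.sum_integral_adjacent_intervals
    (f := fun t => (f' t) ^ 2) (μ := volume) (a := pts) (n := n) (hint f' hcf')
  have sum2 := intervalIntegral.sum_integral_adjacent_intervals
    (f := fun t => (f t) ^ 2) (μ := volume) (a := pts) (n := n) (hint f hcf)
  have sum3 := intervalIntegral.sum_integral_adjacent_intervals
    (f := fun t => (f'' t) ^ 2) (μ := volume) (a := pts) (n := n) (hint f'' hc2)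
  rw [hpts0, hptsn] at sum1 sum2 sum3
  calc (∫ t in a..b, (f' t) ^ 2)
      = ∑ j ∈ Finset.range n, ∫ t in pts j..pts (j + 1), (f' t) ^ 2 := sum1.symm
    _ ≤ ∑ j ∈ Finset.range n, (162 / h ^ 2 * (∫ t in pts j..pts (j + 1), (f t) ^ 2)
          + 3 * h ^ 2 * (∫ t in pts j..pts (j + 1), (f'' t) ^ 2)) := by
        apply Finset.sum_le_sum
        intro j hj
        have hjn := Finset.mem_range.mp hj
        have loc := local_ineq f f' f'' (pts j) (pts (j + 1)) (hlt j)
          (fun t ht => (hd1 t (hsub j hjn ht)).mono (hsub j hjn))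
          (fun t ht => (hd2 t (hsub j hjn ht)).mono (hsub j hjn))
          (hc2.mono (hsub j hjn))
        rwa [hdiff j] at loc
    _ = 162 / h ^ 2 * (∫ t in a..b, (f t) ^ 2) + 3 * h ^ 2 * (∫ t in a..b, (f'' t) ^ 2) := by
        rw [Finset.sum_add_distrib, ← Finset.mul_sum, ← Finset.mul_sum, sum2, sum3]
/-- Quantitative lower bound underlying Proposition 3.1: for twice continuously
differentiable `R` on `[δ, 1-δ]` with `∫ (R'')² ≤ C₁ M²` and `∫ (R')² ≥ c₂`, one has
`∫ R² ≥ k M⁻²` for a constant `k > 0` depending only on `C₁`, `c₂`, `δ`. -/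
theorem stmt_1
    (δ C₁ c₂ : ℝ) (hδ : δ ∈ Ioo (0:ℝ) (1/2)) (hC₁ : 0 < C₁) (hc₂ : 0 < c₂) :
    ∃ k : ℝ, 0 < k ∧ ∀ M : ℝ, 1 ≤ M →
      ∀ R R' R'' : ℝ → ℝ,
        (∀ t ∈ Icc δ (1 - δ), HasDerivWithinAt R (R' t) (Icc δ (1 - δ)) t) →
        (∀ t ∈ Icc δ (1 - δ), HasDerivWithinAt R' (R'' t) (Icc δ (1 - δ)) t) →
        ContinuousOn R'' (Icc δ (1 - δ)) →
        (∫ t in δ..(1 - δ), (R'' t) ^ 2) ≤ C₁ * M ^ 2 →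
        c₂ ≤ (∫ t in δ..(1 - δ), (R' t) ^ 2) →
        k / M ^ 2 ≤ ∫ t in δ..(1 - δ), (R t) ^ 2 := by
  obtain ⟨hδ0, hδ2⟩ := hδ
  set A : ℝ := 1 - 2 * δ with hAdef
  have hA : 0 < A := by simp only [hAdef]; linarith
  set ε : ℝ := Real.sqrt (c₂ / (6 * C₁)) with hεdef
  have hε : 0 < ε := Real.sqrt_pos.mpr (by positivity)
  have hε2 : ε ^ 2 = c₂ / (6 * C₁) := Real.sq_sqrt (by positivity)
  have hcoef : 0 < A / ε + 1 := by
    have := div_pos hA hε; linarith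
  refine ⟨c₂ * A ^ 2 / (324 * (A / ε + 1) ^ 2), ?_, ?_⟩
  · apply div_pos (by positivity)
    exact mul_pos (by norm_num) (pow_pos hcoef 2)
  intro M hM R R' R'' hd1 hd2 hcont hbound hlow
  have hM0 : (0:ℝ) < M := by linarith
  set n : ℕ := ⌈A * M / ε⌉₊ with hndef
  have hx : 0 < A * M / ε := div_pos (mul_pos hA hM0) hε
  have hn : 0 < n := Nat.ceil_pos.mpr hx
  have hn0 : (0:ℝ) < n := Nat.cast_pos.mpr hn
  have hnge : A * M / ε ≤ n := Nat.le_ceil _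
  have hnle : (n:ℝ) ≤ (A / ε + 1) * M := by
    have h1 : (n:ℝ) < A * M / ε + 1 := Nat.ceil_lt_add_one hx.le
    have h2 : A * M / ε + 1 ≤ A * M / ε + M := by linarith
    have h3 : A * M / ε + M = (A / ε + 1) * M := by ring
    linarith
  set h : ℝ := A / n with hhdef
  have hh0 : 0 < h := div_pos hA hn0
  have hab : δ < 1 - δ := by linarith
  have hba : (1:ℝ) - δ - δ = A := by simp only [hAdef]; ring
  have glob := global_ineq R R' R'' δ (1 - δ) n hn hab hd1 hd2 hcont
  rw [hba] at glob
  rw [← hhdef] at glob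
  set Q := ∫ t in δ..(1 - δ), (R t) ^ 2 with hQdef
  set Q2 := ∫ t in δ..(1 - δ), (R'' t) ^ 2 with hQ2def
  have hQ20 : 0 ≤ Q2 :=
    intervalIntegral.integral_nonneg hab.le fun t _ => sq_nonneg _
  -- h ≤ ε / M
  have hhM : h ≤ ε / M := by
    have h1 : A / (n:ℝ) ≤ A / (A * M / ε) :=
      div_le_div_of_nonneg_left hA.le hx hnge
    have h2 : A / (A * M / ε) = ε / M := by
      field_simp
    rw [hhdef, ← h2]; exact h1
  -- small-term bound : 3 h² Q2 ≤ c₂ / 2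
  have hsmall : 3 * h ^ 2 * Q2 ≤ c₂ / 2 := by
    have hsq : h ^ 2 ≤ (ε / M) ^ 2 := pow_le_pow_left₀ hh0.le hhM 2
    have e1 : 3 * (ε / M) ^ 2 * (C₁ * M ^ 2) = c₂ / 2 := by
      rw [div_pow, hε2]
      field_simp
      ring
    have hQ2b : Q2 ≤ C₁ * M ^ 2 := hbound
    calc 3 * h ^ 2 * Q2 ≤ 3 * (ε / M) ^ 2 * (C₁ * M ^ 2) := by
          apply mul_le_mul (by nlinarith) hQ2b hQ20 (by positivity)
      _ = c₂ / 2 := e1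
  have hmain : c₂ / 2 ≤ 162 / h ^ 2 * Q := by linarith [glob, hlow, hsmall]
  have hQlow : c₂ * h ^ 2 / 324 ≤ Q := by
    have e : 162 / h ^ 2 * Q = 162 * Q / h ^ 2 := by ring
    rw [e, le_div_iff₀ (pow_pos hh0 2)] at hmain
    nlinarith [hmain]
  -- h is not too small
  have hmin : A / ((A / ε + 1) * M) ≤ h := by
    rw [hhdef]
    exact div_le_div_of_nonneg_left hA.le hn0 hnle
  have hminpos : 0 < A / ((A / ε + 1) * M) := div_pos hA (mul_pos hcoef hM0)
  have final : c₂ * A ^ 2 / (324 * (A / ε + 1) ^ 2) / M ^ 2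
      = c₂ * (A / ((A / ε + 1) * M)) ^ 2 / 324 := by
    field_simp
  rw [final]
  calc c₂ * (A / ((A / ε + 1) * M)) ^ 2 / 324 ≤ c₂ * h ^ 2 / 324 := by
        gcongr
    _ ≤ Q := hQlow
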